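/- Let (λ_n)_{n∈ℕ} be such that λ_n is a unit of R_n for every n. Assume: (a) for every a ∈ A with a ≠ 0 there exist real constants 0 < c ≤ C with c ≤ |a(n)|_n ≤ C for all n; (b) there is ε > 0 with |λ_n|_n ≥ 1 + ε for all n. Let (f_i)_{i∈I} be a family of integer sequences such that every nonzero element g of the ℤ-submodule of ℤ^ℕ spanned by the f_i takes each integer value only finitely often (equivalently |g(n)| → ∞). Then the map g ↦ F_g := (λ_n^{g(n)})_{n∈ℕ} is an injective group homomorphism from the ℤ-span of the f_i into the units of R, so its image 𝓕 is a free abelian group, and moreover 𝓕 is subsequence-free over A: for every infinite X ⊆ ℕ, all pairwise distinct g_1,…,g_r in the ℤ-span of the f_i and all a_1,…,a_r ∈ A, if ∑_{j=1}^r a_j(n)·λ_n^{g_j(n)} = 0 for all n ∈ X, then a_1 = … = a_r = 0. -/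

import Mathlib

lemma my_abs_zpow {S : Type*} [CommRing S] [IsDomain S] (v : AbsoluteValue S ℝ)
    (u : Sˣ) (k : ℤ) : v ((u ^ k : Sˣ) : S) = v (u : S) ^ k := by
  cases k with
  | ofNat m => simp [zpow_natCast, v.map_pow]
  | negSucc m =>
      have h1 : v (((u ^ (m + 1))⁻¹ : Sˣ) : S) * v ((u ^ (m+1) : Sˣ) : S) = 1 := by
        rw [← v.map_mul]; simp
      have := eq_inv_of_mul_eq_one_left h1
      simp only [zpow_negSucc, this, Units.val_pow_eq_pow_val, v.map_pow]

theorem zpow_family_injective_and_subsequenceFree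
    {R : ℕ → Type*} [∀ n, CommRing (R n)] [∀ n, IsDomain (R n)]
    (v : ∀ n, AbsoluteValue (R n) ℝ) (A : Subring (∀ n, R n))
    (lam : ∀ n, (R n)ˣ)
    (ha : ∀ a ∈ A, a ≠ (0 : ∀ n, R n) →
      ∃ c C : ℝ, 0 < c ∧ c ≤ C ∧ ∀ n, c ≤ v n (a n) ∧ v n (a n) ≤ C)
    (hε : ∃ ε : ℝ, 0 < ε ∧ ∀ n, 1 + ε ≤ v n (lam n))
    {I : Type*} (f : I → ℕ → ℤ)
    (hf : ∀ g ∈ Submodule.span ℤ (Set.range f), g ≠ (0 : ℕ → ℤ) →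
      ∀ m : ℤ, {n : ℕ | g n = m}.Finite) :
    (∀ g h : ℕ → ℤ,
      (fun n => ((lam n ^ (g n + h n) : (R n)ˣ) : R n)) =
        (fun n => ((lam n ^ g n : (R n)ˣ) : R n) * ((lam n ^ h n : (R n)ˣ) : R n))) ∧
    Set.InjOn (fun g : ℕ → ℤ => (fun n => ((lam n ^ g n : (R n)ˣ) : R n)))
      (Submodule.span ℤ (Set.range f) : Set (ℕ → ℤ)) ∧
    (∀ X : Set ℕ, X.Infinite → ∀ (r : ℕ) (g : Fin r → ℕ → ℤ),
      (∀ j, g j ∈ Submodule.span ℤ (Set.range f)) → Function.Injective g →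
      ∀ a : Fin r → ∀ n, R n, (∀ j, a j ∈ A) →
      (∀ n ∈ X, ∑ j, a j n * ((lam n ^ g j n : (R n)ˣ) : R n) = 0) → ∀ j, a j = 0) := by
  obtain ⟨ε, hε0, hεlam⟩ := hε
  -- Part 3 first
  have key : ∀ X : Set ℕ, X.Infinite → ∀ (r : ℕ) (g : Fin r → ℕ → ℤ),
      (∀ j, g j ∈ Submodule.span ℤ (Set.range f)) → Function.Injective g →
      ∀ a : Fin r → ∀ n, R n, (∀ j, a j ∈ A) →
      (∀ n ∈ X, ∑ j, a j n * ((lam n ^ g j n : (R n)ˣ) : R n) = 0) → ∀ j, a j = 0 := by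
    intro X hX r g hg hginj a hA hsum j
    by_contra hj
    classical
    set S : Finset (Fin r) := Finset.univ.filter (fun j => a j ≠ 0) with hSdef
    have hjS : j ∈ S := by simp [hSdef, hj]
    have hSne : S.Nonempty := ⟨j, hjS⟩
    have haS : ∀ k ∈ S, a k ≠ 0 := by intro k hk; simpa [hSdef] using hk
    -- constants
    have hconst : ∀ k : Fin r, ∃ c C : ℝ, 0 < c ∧ c ≤ C ∧
        (a k ≠ 0 → ∀ n, c ≤ v n (a k n) ∧ v n (a k n) ≤ C) := by
      intro k
      by_cases h : a k ≠ 0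
      · obtain ⟨c, C, hc, hcC, hb⟩ := ha (a k) (hA k) h
        exact ⟨c, C, hc, hcC, fun _ => hb⟩
      · exact ⟨1, 1, one_pos, le_refl _, fun h' => absurd h' h⟩
    choose c C hc hcC hb using hconst
    set cm : ℝ := S.inf' hSne c with hcm
    set CM : ℝ := S.sup' hSne C with hCM
    have hcm0 : 0 < cm := by
      rw [hcm, Finset.lt_inf'_iff]; exact fun k _ => hc k
    have hCM0 : 0 < CM := lt_of_lt_of_le (hc j) (le_trans (hcC j) (Finset.le_sup' C hjS))
    obtain ⟨N, hN⟩ : ∃ N : ℕ, (S.card : ℝ) * CM / cm < (1 + ε) ^ N :=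
      pow_unbounded_of_one_lt _ (by linarith)
    -- pairwise difference sets are finite
    have hpair : ∀ j k : Fin r, j ≠ k → {n : ℕ | |g j n - g k n| ≤ (N : ℤ)}.Finite := by
      intro j k hjk
      have hmem : g j - g k ∈ Submodule.span ℤ (Set.range f) :=
        Submodule.sub_mem _ (hg j) (hg k)
      have hne : g j - g k ≠ 0 := by
        intro h; exact hjk (hginj (sub_eq_zero.mp h))
      have hsub : {n : ℕ | |g j n - g k n| ≤ (N : ℤ)} ⊆
          ⋃ m ∈ Finset.Icc (-(N:ℤ)) (N:ℤ), {n : ℕ | (g j - g k) n = m} := by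
        intro n hn
        simp only [Set.mem_setOf_eq] at hn
        refine Set.mem_biUnion (show g j n - g k n ∈ Finset.Icc (-(N:ℤ)) (N:ℤ) from ?_) rfl
        rw [Finset.mem_Icc]; exact abs_le.mp hn
      exact Set.Finite.subset (Set.Finite.biUnion (Finset.Icc (-(N:ℤ)) (N:ℤ)).finite_toSet
        (fun m _ => hf _ hmem hne m)) hsub
    have hT : ∀ p : Fin r × Fin r,
        (if p.1 ≠ p.2 then {n : ℕ | |g p.1 n - g p.2 n| ≤ (N : ℤ)} else ∅).Finite := by
      intro p
      split
      · exact hpair _ _ ‹_›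
      · exact Set.finite_empty
    have hBfin : (⋃ p : Fin r × Fin r,
        (if p.1 ≠ p.2 then {n : ℕ | |g p.1 n - g p.2 n| ≤ (N : ℤ)} else ∅)).Finite :=
      Set.finite_iUnion hT
    obtain ⟨n, hnX, hnB⟩ := (hX.diff hBfin).nonempty
    have hgap : ∀ j k : Fin r, j ≠ k → (N : ℤ) < |g j n - g k n| := by
      intro j k hjk
      by_contra h
      push_neg at h
      refine hnB (Set.mem_iUnion.mpr ⟨(j, k), ?_⟩)
      rw [if_pos hjk]
      exact h
    -- pick max index
    obtain ⟨j0, hj0S, hj0max⟩ := S.exists_max_image (fun k => g k n) hSne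
    -- the sum over S
    have hsumS : ∑ k ∈ S, a k n * ((lam n ^ g k n : (R n)ˣ) : R n) = 0 := by
      rw [← hsum n hnX]
      exact (Finset.sum_subset (Finset.subset_univ S) (by
        intro x _ hx
        have : a x = 0 := by
          by_contra hax
          exact hx (Finset.mem_filter.mpr ⟨Finset.mem_univ _, hax⟩)
        show a x n * ((lam n ^ g x n : (R n)ˣ) : R n) = 0
        rw [this]
        simp))
    have hterm0 : a j0 n * ((lam n ^ g j0 n : (R n)ˣ) : R n) =
        - ∑ k ∈ S.erase j0, a k n * ((lam n ^ g k n : (R n)ˣ) : R n) := by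
      have := Finset.add_sum_erase S
        (fun k => a k n * ((lam n ^ g k n : (R n)ˣ) : R n)) hj0S
      rw [hsumS] at this
      exact eq_neg_of_add_eq_zero_left this
    -- the estimate
    set w : ℝ := v n ((lam n : R n)) with hw
    have hw1 : 1 < w := by have := hεlam n; rw [hw]; linarith
    have hw0 : 0 < w := by linarith
    have hgapj0 : ∀ k ∈ S.erase j0, g k n ≤ g j0 n - (N + 1 : ℤ) := by
      intro k hk
      obtain ⟨hkne, hkS⟩ := Finset.mem_erase.mp hk
      have h1 := hj0max k hkS
      have h2 := hgap j0 k (fun h => hkne h.symm)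
      rw [abs_of_nonneg (by linarith)] at h2
      omega
    have hterm : ∀ k ∈ S.erase j0,
        v n (a k n * ((lam n ^ g k n : (R n)ˣ) : R n)) ≤
          CM * w ^ (g j0 n - (N + 1 : ℤ)) := by
      intro k hk
      obtain ⟨hkne, hkS⟩ := Finset.mem_erase.mp hk
      rw [(v n).map_mul, my_abs_zpow]
      have h1 : v n (a k n) ≤ CM :=
        le_trans ((hb k (haS k hkS) n).2) (Finset.le_sup' C hkS)
      have h2 : w ^ (g k n) ≤ w ^ (g j0 n - (N + 1 : ℤ)) :=
        zpow_le_zpow_right₀ hw1.le (hgapj0 k hk)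
      exact mul_le_mul h1 h2 (zpow_pos hw0 _).le hCM0.le
    have hmain : cm * w ^ (g j0 n) ≤ (S.card : ℝ) * (CM * w ^ (g j0 n - (N + 1 : ℤ))) := by
      calc cm * w ^ (g j0 n) ≤ v n (a j0 n) * w ^ (g j0 n) := by
            have : cm ≤ v n (a j0 n) :=
              le_trans (Finset.inf'_le c hj0S) (hb j0 (haS j0 hj0S) n).1
            exact mul_le_mul_of_nonneg_right this (zpow_pos hw0 _).le
        _ = v n (a j0 n * ((lam n ^ g j0 n : (R n)ˣ) : R n)) := by
            rw [(v n).map_mul, my_abs_zpow]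
        _ = v n (∑ k ∈ S.erase j0, a k n * ((lam n ^ g k n : (R n)ˣ) : R n)) := by
            rw [hterm0, (v n).map_neg]
        _ ≤ ∑ k ∈ S.erase j0, v n (a k n * ((lam n ^ g k n : (R n)ˣ) : R n)) :=
            (v n).sum_le _ _
        _ ≤ ∑ _k ∈ S.erase j0, CM * w ^ (g j0 n - (N + 1 : ℤ)) :=
            Finset.sum_le_sum hterm
        _ = ((S.erase j0).card : ℝ) * (CM * w ^ (g j0 n - (N + 1 : ℤ))) := by
            rw [Finset.sum_const, nsmul_eq_mul]
        _ ≤ (S.card : ℝ) * (CM * w ^ (g j0 n - (N + 1 : ℤ))) := by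
            apply mul_le_mul_of_nonneg_right _ (by positivity)
            exact Nat.cast_le.mpr (Finset.card_le_card (Finset.erase_subset _ _))
    -- divide by w ^ (g j0 n)
    have hsplit : w ^ (g j0 n - (N + 1 : ℤ)) = w ^ (g j0 n) * w ^ (-(N + 1 : ℤ)) := by
      rw [← zpow_add₀ hw0.ne']
      ring_nf
    have hdiv : cm ≤ (S.card : ℝ) * CM * w ^ (-(N + 1 : ℤ)) := by
      have hpos : (0:ℝ) < w ^ (g j0 n) := zpow_pos hw0 _
      rw [hsplit] at hmain
      have := (mul_le_mul_iff_of_pos_right hpos).mp (by linarith [hmain] :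
        cm * w ^ (g j0 n) ≤ ((S.card : ℝ) * CM * w ^ (-(N + 1 : ℤ))) * w ^ (g j0 n))
      exact this
    -- final numeric contradiction
    have hwn : w ^ (-(N + 1 : ℤ)) ≤ ((1 + ε) ^ N)⁻¹ := by
      have heq1 : w ^ (-(N + 1 : ℤ)) = (w ^ (N + 1 : ℕ))⁻¹ := by
        rw [← zpow_natCast w (N + 1)]
        rw [← zpow_neg]
        norm_num
      rw [heq1]
      have h1 : ((1 + ε) : ℝ) ^ N ≤ w ^ (N + 1) := by
        calc ((1 + ε) : ℝ) ^ N ≤ (1 + ε) ^ (N + 1) :=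
              pow_le_pow_right₀ (by linarith) (Nat.le_succ N)
          _ ≤ w ^ (N + 1) := by
              have : ((1:ℝ) + ε) ≤ w := by rw [hw]; exact hεlam n
              exact pow_le_pow_left₀ (by linarith) this _
      exact inv_anti₀ (pow_pos (by linarith) N) h1
    have hcard1 : (1:ℝ) ≤ (S.card : ℝ) := by
      exact_mod_cast Nat.one_le_iff_ne_zero.mpr (Finset.card_ne_zero_of_mem hjS)
    have hfinal : (S.card : ℝ) * CM * ((1 + ε) ^ N)⁻¹ < cm := by
      have hp : (0:ℝ) < (1 + ε) ^ N := pow_pos (by linarith) N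
      rw [div_lt_iff₀ hcm0] at hN
      rw [mul_inv_lt_iff₀ hp]
      linarith [hN]
    have : cm ≤ (S.card : ℝ) * CM * ((1 + ε) ^ N)⁻¹ := by
      calc cm ≤ (S.card : ℝ) * CM * w ^ (-(N + 1 : ℤ)) := hdiv
        _ ≤ (S.card : ℝ) * CM * ((1 + ε) ^ N)⁻¹ := by
            apply mul_le_mul_of_nonneg_left hwn (by positivity)
    linarith
  refine ⟨?_, ?_, key⟩
  · intro g h
    funext n
    rw [zpow_add, Units.val_mul]
  · intro g hgmem h hhmem heq
    by_contra hne
    have h1A : (1 : ∀ n, R n) ∈ A := A.one_mem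
    have hn1A : (-1 : ∀ n, R n) ∈ A := A.neg_mem h1A
    have hmem2 : ∀ j : Fin 2, (![g, h] : Fin 2 → ℕ → ℤ) j ∈ Submodule.span ℤ (Set.range f) := by
      intro j
      match j with
      | 0 => exact hgmem
      | 1 => exact hhmem
    have hinj2 : Function.Injective (![g, h] : Fin 2 → ℕ → ℤ) := by
      intro i j hij
      match i, j with
      | 0, 0 => rfl
      | 1, 1 => rfl
      | 0, 1 => exact absurd hij hne
      | 1, 0 => exact absurd hij.symm hne
    have hamem2 : ∀ j : Fin 2, (![(1 : ∀ n, R n), -1] : Fin 2 → ∀ n, R n) j ∈ A := by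
      intro j
      match j with
      | 0 => exact h1A
      | 1 => exact hn1A
    have hsum2 : ∀ n ∈ Set.univ, ∑ j : Fin 2,
        (![(1 : ∀ n, R n), -1] : Fin 2 → ∀ n, R n) j n *
          ((lam n ^ (![g, h] : Fin 2 → ℕ → ℤ) j n : (R n)ˣ) : R n) = 0 := by
      intro n _
      have hc := congrFun heq n
      simp only at hc
      rw [Fin.sum_univ_two]
      show (1 : ∀ n, R n) n * ((lam n ^ g n : (R n)ˣ) : R n) +
        (-1 : ∀ n, R n) n * ((lam n ^ h n : (R n)ˣ) : R n) = 0
      rw [hc]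
      simp
    have := key Set.univ Set.infinite_univ 2 ![g, h] hmem2 hinj2 ![(1 : ∀ n, R n), -1] hamem2 hsum2 0
    have h10 : (1 : ∀ n, R n) = 0 := this
    exact one_ne_zero (congrFun h10 0)
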